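/- Let A ∈ ℝ^{r'×N} and B ∈ ℝ^{N×r} be full-rank matrices with r ≤ r' ≤ N, AA^T invertible, and σ_min(P_{A^T}(B)) > 0 where P_{A^T}(B) = A^T(AA^T)^{-1}AB. Then the condition number of AB satisfies κ(AB) ≤ κ(A) · σ_max(B) / σ_min(P_{A^T}(B)). -/

import Mathlib

open scoped BigOperators
open MeasureTheory ProbabilityTheory Matrix

noncomputable def vecEnorm {n : ℕ} (v : Fin n → ℝ) : ℝ :=
  ‖(WithLp.equiv 2 (Fin n → ℝ)).symm v‖

noncomputable def sMax {m n : ℕ} (A : Matrix (Fin m) (Fin n) ℝ) : ℝ :=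
  ⨆ x : {x : Fin n → ℝ // vecEnorm x = 1}, vecEnorm (A.mulVec x.1)

noncomputable def sMin {m n : ℕ} (A : Matrix (Fin m) (Fin n) ℝ) : ℝ :=
  ⨅ x : {x : Fin n → ℝ // vecEnorm x = 1}, vecEnorm (A.mulVec x.1)

namespace StmtAux

lemma enorm_nonneg' {n : ℕ} (v : Fin n → ℝ) : 0 ≤ vecEnorm v := norm_nonneg _

lemma enorm_smul' {n : ℕ} (c : ℝ) (v : Fin n → ℝ) : vecEnorm (c • v) = |c| * vecEnorm v := by
  unfold vecEnorm
  rw [show (WithLp.equiv 2 (Fin n → ℝ)).symm (c • v) = c • (WithLp.equiv 2 (Fin n → ℝ)).symm v from rfl,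
    norm_smul, Real.norm_eq_abs]

lemma enorm_eq_zero' {n : ℕ} (v : Fin n → ℝ) : vecEnorm v = 0 ↔ v = 0 := by
  unfold vecEnorm
  rw [norm_eq_zero]
  constructor
  · intro h; exact (WithLp.equiv 2 (Fin n → ℝ)).symm.injective (by simpa using h)
  · rintro rfl; rfl

lemma enorm_sq {n : ℕ} (v : Fin n → ℝ) : vecEnorm v ^ 2 = v ⬝ᵥ v := by
  unfold vecEnorm
  rw [← real_inner_self_eq_norm_sq]
  simp [PiLp.inner_apply, dotProduct, mul_comm]
  rw [EuclideanSpace.norm_sq_eq]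
  simp [sq]

noncomputable def clm {m n : ℕ} (M : Matrix (Fin m) (Fin n) ℝ) :
    EuclideanSpace ℝ (Fin n) →L[ℝ] EuclideanSpace ℝ (Fin m) :=
  LinearMap.toContinuousLinearMap (Matrix.toEuclideanLin M)

lemma enorm_mulVec_eq {m n : ℕ} (M : Matrix (Fin m) (Fin n) ℝ) (v : Fin n → ℝ) :
    vecEnorm (M.mulVec v) = ‖clm M ((WithLp.equiv 2 (Fin n → ℝ)).symm v)‖ := rfl

lemma bddAbove_range' {m n : ℕ} (M : Matrix (Fin m) (Fin n) ℝ) :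
    BddAbove (Set.range fun x : {x : Fin n → ℝ // vecEnorm x = 1} => vecEnorm (M.mulVec x.1)) := by
  refine ⟨‖clm M‖, ?_⟩
  rintro y ⟨x, rfl⟩
  show vecEnorm (M.mulVec x.1) ≤ _
  rw [enorm_mulVec_eq]
  calc ‖clm M ((WithLp.equiv 2 (Fin n → ℝ)).symm x.1)‖
      ≤ ‖clm M‖ * ‖(WithLp.equiv 2 (Fin n → ℝ)).symm x.1‖ := (clm M).le_opNorm _
    _ = ‖clm M‖ := by rw [show ‖_‖ = vecEnorm x.1 from rfl, x.2, mul_one]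

lemma sMax_nonneg {m n : ℕ} (M : Matrix (Fin m) (Fin n) ℝ) : 0 ≤ sMax M :=
  Real.iSup_nonneg fun _ => enorm_nonneg' _

lemma sMin_nonneg {m n : ℕ} (M : Matrix (Fin m) (Fin n) ℝ) : 0 ≤ sMin M :=
  Real.iInf_nonneg fun _ => enorm_nonneg' _

lemma enorm_mulVec_le {m n : ℕ} (M : Matrix (Fin m) (Fin n) ℝ) (v : Fin n → ℝ) :
    vecEnorm (M.mulVec v) ≤ sMax M * vecEnorm v := by
  rcases eq_or_ne v 0 with rfl | hv
  · rw [Matrix.mulVec_zero, (enorm_eq_zero' (0 : Fin n → ℝ)).2 rfl, mul_zero]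
    exact le_of_eq ((enorm_eq_zero' _).2 rfl)
  · have hpos : 0 < vecEnorm v := (enorm_nonneg' v).lt_of_ne' (fun h => hv ((enorm_eq_zero' v).1 h))
    set u : Fin n → ℝ := (vecEnorm v)⁻¹ • v with hu
    have hu1 : vecEnorm u = 1 := by
      rw [hu, enorm_smul', abs_of_pos (inv_pos.2 hpos), inv_mul_cancel₀ hpos.ne']
    have h1 : vecEnorm (M.mulVec u) ≤ sMax M :=
      le_ciSup (bddAbove_range' M) (⟨u, hu1⟩ : {x : Fin n → ℝ // vecEnorm x = 1})
    have h2 : vecEnorm (M.mulVec v) = vecEnorm v * vecEnorm (M.mulVec u) := by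
      rw [hu, Matrix.mulVec_smul, enorm_smul', abs_of_pos (inv_pos.2 hpos)]
      field_simp
    rw [h2, mul_comm (sMax M)]
    exact mul_le_mul_of_nonneg_left h1 hpos.le

lemma sMin_mul_enorm_le {m n : ℕ} (M : Matrix (Fin m) (Fin n) ℝ) (v : Fin n → ℝ) :
    sMin M * vecEnorm v ≤ vecEnorm (M.mulVec v) := by
  rcases eq_or_ne v 0 with rfl | hv
  · rw [(enorm_eq_zero' (0 : Fin n → ℝ)).2 rfl, mul_zero]
    exact enorm_nonneg' _
  · have hpos : 0 < vecEnorm v := (enorm_nonneg' v).lt_of_ne' (fun h => hv ((enorm_eq_zero' v).1 h))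
    set u : Fin n → ℝ := (vecEnorm v)⁻¹ • v with hu
    have hu1 : vecEnorm u = 1 := by
      rw [hu, enorm_smul', abs_of_pos (inv_pos.2 hpos), inv_mul_cancel₀ hpos.ne']
    have h1 : sMin M ≤ vecEnorm (M.mulVec u) :=
      ciInf_le ⟨0, by rintro y ⟨x, rfl⟩; exact enorm_nonneg' _⟩
        (⟨u, hu1⟩ : {x : Fin n → ℝ // vecEnorm x = 1})
    have h2 : vecEnorm (M.mulVec v) = vecEnorm v * vecEnorm (M.mulVec u) := by
      rw [hu, Matrix.mulVec_smul, enorm_smul', abs_of_pos (inv_pos.2 hpos)]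
      field_simp
    rw [h2, mul_comm (sMin M)]
    exact mul_le_mul_of_nonneg_left h1 hpos.le

lemma dotProduct_le_enorm {n : ℕ} (v w : Fin n → ℝ) :
    v ⬝ᵥ w ≤ vecEnorm v * vecEnorm w := by
  have h := real_inner_le_norm ((WithLp.equiv 2 (Fin n → ℝ)).symm v)
    ((WithLp.equiv 2 (Fin n → ℝ)).symm w)
  have h2 : inner ℝ ((WithLp.equiv 2 (Fin n → ℝ)).symm v) ((WithLp.equiv 2 (Fin n → ℝ)).symm w)
      = v ⬝ᵥ w := by
    simp [PiLp.inner_apply, dotProduct, RCLike.inner_apply, mul_comm]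
  rw [h2] at h
  exact h

lemma sMin_pos_of_inj {m n : ℕ} (hn : 0 < n) (M : Matrix (Fin m) (Fin n) ℝ)
    (hinj : ∀ x : Fin n → ℝ, M.mulVec x = 0 → x = 0) : 0 < sMin M := by
  set g : EuclideanSpace ℝ (Fin n) → ℝ := fun y => ‖clm M y‖ with hg
  have hcont : Continuous g := (clm M).continuous.norm
  have hcomp : IsCompact (Metric.sphere (0 : EuclideanSpace ℝ (Fin n)) 1) :=
    isCompact_sphere _ _
  have hne : (Metric.sphere (0 : EuclideanSpace ℝ (Fin n)) 1).Nonempty := by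
    refine ⟨EuclideanSpace.single ⟨0, hn⟩ (1:ℝ), ?_⟩
    simp [EuclideanSpace.norm_single]
  obtain ⟨y₀, hy₀mem, hmin⟩ := hcomp.exists_isMinOn hne hcont.continuousOn
  have hy₀ : ‖y₀‖ = 1 := by simpa using mem_sphere_zero_iff_norm.mp hy₀mem
  have hy₀ne : y₀ ≠ 0 := fun h => by simp [h] at hy₀
  have hgpos : 0 < g y₀ := by
    rw [hg]
    simp only [norm_pos_iff]
    intro hz
    apply hy₀ne
    have : M.mulVec ((WithLp.equiv 2 (Fin n → ℝ)) y₀) = 0 := by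
      have := congrArg (WithLp.equiv 2 (Fin m → ℝ)) hz
      simpa [Matrix.toEuclideanLin_apply, clm] using this
    have h0 := hinj _ this
    exact (WithLp.equiv 2 (Fin n → ℝ)).injective (by simpa using h0)
  haveI : Nonempty {x : Fin n → ℝ // vecEnorm x = 1} := by
    refine ⟨⟨(WithLp.equiv 2 (Fin n → ℝ)) y₀, ?_⟩⟩
    show ‖(WithLp.equiv 2 (Fin n → ℝ)).symm _‖ = 1
    simpa using hy₀
  refine lt_of_lt_of_le hgpos (le_ciInf fun x => ?_)
  have hxmem : (WithLp.equiv 2 (Fin n → ℝ)).symm x.1 ∈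
      Metric.sphere (0 : EuclideanSpace ℝ (Fin n)) 1 := by
    rw [mem_sphere_zero_iff_norm]
    exact x.2
  have := hmin hxmem
  rw [enorm_mulVec_eq]
  exact this

/-- Key lemma: for any `w`, `sMin Aᵀ * ‖Aᵀ w‖ ≤ ‖A Aᵀ w‖`. -/
lemma key {r' N : ℕ} (A : Matrix (Fin r') (Fin N) ℝ) (w : Fin r' → ℝ) :
    sMin Aᵀ * vecEnorm (Aᵀ.mulVec w) ≤ vecEnorm ((A * Aᵀ).mulVec w) := by
  rcases eq_or_ne w 0 with rfl | hw
  · rw [Matrix.mulVec_zero, (enorm_eq_zero' (0 : Fin N → ℝ)).2 rfl, mul_zero]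
    exact enorm_nonneg' _
  · have hwpos : 0 < vecEnorm w :=
      (enorm_nonneg' w).lt_of_ne' (fun h => hw ((enorm_eq_zero' w).1 h))
    have hdp : w ⬝ᵥ ((A * Aᵀ).mulVec w) = (Aᵀ.mulVec w) ⬝ᵥ (Aᵀ.mulVec w) := by
      rw [← Matrix.mulVec_mulVec, Matrix.dotProduct_mulVec, ← Matrix.mulVec_transpose]
    have hsq : vecEnorm (Aᵀ.mulVec w) ^ 2 = w ⬝ᵥ ((A * Aᵀ).mulVec w) := by
      rw [enorm_sq, hdp]
    have hCS : w ⬝ᵥ ((A * Aᵀ).mulVec w) ≤ vecEnorm w * vecEnorm ((A * Aᵀ).mulVec w) :=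
      dotProduct_le_enorm _ _
    have hlow : sMin Aᵀ * vecEnorm w * vecEnorm (Aᵀ.mulVec w) ≤ vecEnorm (Aᵀ.mulVec w) ^ 2 := by
      rw [sq]
      exact mul_le_mul_of_nonneg_right (sMin_mul_enorm_le Aᵀ w) (enorm_nonneg' _)
    have hchain : sMin Aᵀ * vecEnorm w * vecEnorm (Aᵀ.mulVec w)
        ≤ vecEnorm w * vecEnorm ((A * Aᵀ).mulVec w) :=
      le_trans hlow (hsq ▸ hCS)
    have : vecEnorm w * (sMin Aᵀ * vecEnorm (Aᵀ.mulVec w))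
        ≤ vecEnorm w * vecEnorm ((A * Aᵀ).mulVec w) := by
      calc vecEnorm w * (sMin Aᵀ * vecEnorm (Aᵀ.mulVec w))
          = sMin Aᵀ * vecEnorm w * vecEnorm (Aᵀ.mulVec w) := by ring
        _ ≤ _ := hchain
    exact le_of_mul_le_mul_left this hwpos

end StmtAux

open StmtAux

theorem stmt_3 {r r' N : ℕ} (hr : r ≤ r') (hr' : r' ≤ N)
    (A : Matrix (Fin r') (Fin N) ℝ) (B : Matrix (Fin N) (Fin r) ℝ)
    (hArank : A.rank = r') (hBrank : B.rank = r)
    (hInv : IsUnit (A * Aᵀ).det)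
    (hP : 0 < sMin (Aᵀ * (A * Aᵀ)⁻¹ * A * B)) :
    sMax (A * B) / sMin (A * B) ≤
      (sMax A / sMin Aᵀ) * (sMax B / sMin (Aᵀ * (A * Aᵀ)⁻¹ * A * B)) := by
  set P : Matrix (Fin N) (Fin r) ℝ := Aᵀ * (A * Aᵀ)⁻¹ * A * B with hPdef
  -- r is positive
  have hrpos : 0 < r := by
    by_contra h
    push_neg at h
    interval_cases r
    haveI : IsEmpty {x : Fin 0 → ℝ // vecEnorm x = 1} := by
      constructor
      rintro ⟨x, hx⟩
      have hx0 : x = 0 := Subsingleton.elim _ _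
      rw [hx0, (enorm_eq_zero' (0 : Fin 0 → ℝ)).2 rfl] at hx
      exact one_ne_zero hx.symm
    have : sMin P = 0 := by
      unfold sMin
      exact Real.iInf_of_isEmpty _
    rw [this] at hP
    exact lt_irrefl 0 hP
  haveI hne : Nonempty {x : Fin r → ℝ // vecEnorm x = 1} := by
    refine ⟨⟨(WithLp.equiv 2 (Fin r → ℝ)) (EuclideanSpace.single ⟨0, hrpos⟩ (1:ℝ)), ?_⟩⟩
    show ‖(WithLp.equiv 2 (Fin r → ℝ)).symm _‖ = 1
    simp [EuclideanSpace.norm_single]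
  -- Aᵀ has trivial kernel
  have hAinj : ∀ x : Fin r' → ℝ, Aᵀ.mulVec x = 0 → x = 0 := by
    intro x hx
    have h1 : (A * Aᵀ).mulVec x = 0 := by
      rw [← Matrix.mulVec_mulVec, hx, Matrix.mulVec_zero]
    have h2 : ((A * Aᵀ)⁻¹ * (A * Aᵀ)).mulVec x = 0 := by
      rw [← Matrix.mulVec_mulVec, h1, Matrix.mulVec_zero]
    rwa [Matrix.nonsing_inv_mul _ hInv, Matrix.one_mulVec] at h2
  have hAt : 0 < sMin Aᵀ := sMin_pos_of_inj (lt_of_lt_of_le hrpos hr) Aᵀ hAinj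
  -- (A Aᵀ)(A Aᵀ)⁻¹ A B = A B
  have hcancel : A * P = A * B := by
    rw [hPdef]
    calc A * (Aᵀ * (A * Aᵀ)⁻¹ * A * B)
        = (A * Aᵀ) * (A * Aᵀ)⁻¹ * (A * B) := by simp only [Matrix.mul_assoc]
      _ = A * B := by rw [Matrix.mul_nonsing_inv _ hInv, Matrix.one_mul]
  -- lower bound for sMin (A*B)
  have hlow : sMin Aᵀ * sMin P ≤ sMin (A * B) := by
    refine le_ciInf fun x => ?_
    set w : Fin r' → ℝ := ((A * Aᵀ)⁻¹ * A * B).mulVec x.1 with hw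
    have hPw : Aᵀ.mulVec w = P.mulVec x.1 := by
      rw [hw, Matrix.mulVec_mulVec, hPdef]
      congr 1
      simp only [Matrix.mul_assoc]
    have hABw : (A * Aᵀ).mulVec w = (A * B).mulVec x.1 := by
      rw [hw, Matrix.mulVec_mulVec]
      have heq : A * Aᵀ * ((A * Aᵀ)⁻¹ * A * B) = A * B :=
        calc A * Aᵀ * ((A * Aᵀ)⁻¹ * A * B) = A * (Aᵀ * (A * Aᵀ)⁻¹ * A * B) := by
              simp only [Matrix.mul_assoc]
          _ = A * B := hcancel
      rw [heq]
    calc sMin Aᵀ * sMin P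
        ≤ sMin Aᵀ * vecEnorm (P.mulVec x.1) := by
          refine mul_le_mul_of_nonneg_left ?_ hAt.le
          exact ciInf_le ⟨0, by rintro y ⟨z, rfl⟩; exact enorm_nonneg' _⟩ x
      _ = sMin Aᵀ * vecEnorm (Aᵀ.mulVec w) := by rw [hPw]
      _ ≤ vecEnorm ((A * Aᵀ).mulVec w) := key A w
      _ = vecEnorm ((A * B).mulVec x.1) := by rw [hABw]
  -- upper bound for sMax (A*B)
  have hup : sMax (A * B) ≤ sMax A * sMax B := by
    refine Real.iSup_le (fun x => ?_) (mul_nonneg (sMax_nonneg A) (sMax_nonneg B))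
    calc vecEnorm ((A * B).mulVec x.1)
        = vecEnorm (A.mulVec (B.mulVec x.1)) := by rw [Matrix.mulVec_mulVec]
      _ ≤ sMax A * vecEnorm (B.mulVec x.1) := enorm_mulVec_le A _
      _ ≤ sMax A * (sMax B * vecEnorm x.1) :=
          mul_le_mul_of_nonneg_left (enorm_mulVec_le B _) (sMax_nonneg A)
      _ = sMax A * sMax B := by rw [x.2, mul_one]
  rw [div_mul_div_comm]
  exact div_le_div₀ (mul_nonneg (sMax_nonneg A) (sMax_nonneg B)) hup
    (mul_pos hAt hP) hlow
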